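/- arXiv:2211.10200 — 2 statements merged into one kernel-verified Lean document; each statement's English description precedes it below -/
import Mathlib

section
/- Suppose h ∈ 𝓗. Then for every ϑ ∈ Θ with ϑ ≤ ϑ₀ − δ, the Kullback–Leibler divergence J is differentiable at ϑ with J′(ϑ) = λ₀·ln(1 + S/λ₀) − S, and this value is strictly negative. -/
open MeasureTheory Real Set Filter

/-- The cusp signal shape: `ψ(x) = (x/δ)^κ` for `0 < x < δ`, `1` for `x ≥ δ`, `0` for `x ≤ 0`. -/
noncomputable def psi (δ κ : ℝ) (x : ℝ) : ℝ :=
  if δ ≤ x then 1 else if 0 < x then (x / δ) ^ κ else 0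

/-- Theoretical intensity `λ(ϑ, t) = S ψ(t − ϑ) + λ₀`. -/
noncomputable def lamT (S lam0 δ κ : ℝ) (ϑ t : ℝ) : ℝ :=
  S * psi δ κ (t - ϑ) + lam0

/-- Real intensity `λ*(ϑ₀, t) = (S + h) ψ(t − ϑ₀) + λ₀`. -/
noncomputable def lamR (S h lam0 δ κ : ℝ) (ϑ₀ t : ℝ) : ℝ :=
  (S + h) * psi δ κ (t - ϑ₀) + lam0

/-- The Kullback–Leibler divergence `J(ϑ)`. -/
noncomputable def JKL (S h lam0 δ κ τ ϑ₀ : ℝ) (ϑ : ℝ) : ℝ :=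
  ∫ t in (min ϑ ϑ₀)..τ,
    (lamT S lam0 δ κ ϑ t / lamR S h lam0 δ κ ϑ₀ t - 1 -
      Real.log (lamT S lam0 δ κ ϑ t / lamR S h lam0 δ κ ϑ₀ t)) *
      lamR S h lam0 δ κ ϑ₀ t

namespace StmtAux

/-- The integrand of `JKL`. -/
noncomputable def Fker (S h lam0 δ κ ϑ₀ : ℝ) (ϑ t : ℝ) : ℝ :=
  (lamT S lam0 δ κ ϑ t / lamR S h lam0 δ κ ϑ₀ t - 1 -
    Real.log (lamT S lam0 δ κ ϑ t / lamR S h lam0 δ κ ϑ₀ t)) *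
    lamR S h lam0 δ κ ϑ₀ t

/-- The integrand with the theoretical intensity saturated at `S + lam0`. -/
noncomputable def Finf (S h lam0 δ κ ϑ₀ : ℝ) (t : ℝ) : ℝ :=
  ((S + lam0) / lamR S h lam0 δ κ ϑ₀ t - 1 -
    Real.log ((S + lam0) / lamR S h lam0 δ κ ϑ₀ t)) *
    lamR S h lam0 δ κ ϑ₀ t

/-- The integrand before the jump of the real intensity, as a function of `t - ϑ`. -/
noncomputable def gfun (S lam0 δ κ : ℝ) (u : ℝ) : ℝ :=
  ((S * psi δ κ u + lam0) / lam0 - 1 -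
    Real.log ((S * psi δ κ u + lam0) / lam0)) * lam0

variable {S h lam0 δ κ τ ϑ₀ : ℝ}

lemma psi_of_nonpos (hδ : 0 < δ) {x : ℝ} (hx : x ≤ 0) : psi δ κ x = 0 := by
  unfold psi
  rw [if_neg (by linarith), if_neg (by linarith)]

lemma psi_of_ge {x : ℝ} (hx : δ ≤ x) : psi δ κ x = 1 := by
  unfold psi; rw [if_pos hx]

lemma psi_nonneg (hδ : 0 < δ) (x : ℝ) : 0 ≤ psi δ κ x := by
  unfold psi
  split_ifs with h1 h2
  · norm_num
  · exact Real.rpow_nonneg (div_nonneg h2.le hδ.le) κ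
  · exact le_rfl

lemma psi_le_one (hδ : 0 < δ) (hκ0 : 0 ≤ κ) (x : ℝ) : psi δ κ x ≤ 1 := by
  unfold psi
  split_ifs with h1 h2
  · exact le_rfl
  · exact Real.rpow_le_one (div_nonneg h2.le hδ.le) ((div_le_one hδ).2 (le_of_not_ge h1)) hκ0
  · norm_num

lemma psi_ge (hδ : 0 < δ) (hκ0 : 0 < κ) (hκ1 : κ ≤ 1) {c x : ℝ}
    (hc0 : 0 < c) (hcδ : c ≤ δ) (hcx : c ≤ x) : c / δ ≤ psi δ κ x := by
  unfold psi
  split_ifs with h1 h2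
  · exact (div_le_one hδ).2 hcδ
  · calc c / δ = (c / δ) ^ (1 : ℝ) := (Real.rpow_one _).symm
      _ ≤ (c / δ) ^ κ :=
        Real.rpow_le_rpow_of_exponent_ge (div_pos hc0 hδ) ((div_le_one hδ).2 hcδ) hκ1
      _ ≤ (x / δ) ^ κ :=
        Real.rpow_le_rpow (div_nonneg hc0.le hδ.le) (by gcongr) hκ0.le
  · exact absurd (lt_of_lt_of_le hc0 hcx) h2

lemma psi_eq_min (hδ : 0 < δ) (hκ0 : 0 < κ) (x : ℝ) :
    psi δ κ x = min 1 ((max x 0 / δ) ^ κ) := by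
  unfold psi
  split_ifs with h1 h2
  · rw [max_eq_left (by linarith), eq_comm, min_eq_left]
    calc (1 : ℝ) = (1 : ℝ) ^ κ := (Real.one_rpow κ).symm
      _ ≤ (x / δ) ^ κ := Real.rpow_le_rpow zero_le_one ((one_le_div hδ).2 h1) hκ0.le
  · rw [max_eq_left h2.le, eq_comm, min_eq_right]
    exact Real.rpow_le_one (div_nonneg h2.le hδ.le) ((div_le_one hδ).2 (le_of_not_ge h1)) hκ0.le
  · rw [max_eq_right (le_of_not_gt h2), zero_div, Real.zero_rpow hκ0.ne', eq_comm, min_eq_right]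
    norm_num

lemma psi_continuous (hδ : 0 < δ) (hκ0 : 0 < κ) : Continuous (psi δ κ) := by
  have : psi δ κ = fun x => min 1 ((max x 0 / δ) ^ κ) := funext (psi_eq_min hδ hκ0)
  rw [this]
  exact continuous_const.min
    ((((continuous_id.max continuous_const).div_const δ).rpow_const fun x => Or.inr hκ0.le))

lemma cont_phi {f g : ℝ → ℝ} (hf : Continuous f) (hg : Continuous g)
    (hf0 : ∀ t, 0 < f t) (hg0 : ∀ t, 0 < g t) :
    Continuous fun t => (f t / g t - 1 - Real.log (f t / g t)) * g t := by
  have hdiv : Continuous fun t => f t / g t := hf.div hg fun t => (hg0 t).ne'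
  exact ((hdiv.sub continuous_const).sub
    (hdiv.log fun t => (div_pos (hf0 t) (hg0 t)).ne')).mul hg

lemma lamT_cont (hδ : 0 < δ) (hκ0 : 0 < κ) (S lam0 ϑ : ℝ) :
    Continuous fun t => lamT S lam0 δ κ ϑ t := by
  unfold lamT
  exact ((continuous_const.mul ((psi_continuous hδ hκ0).comp (continuous_sub_right ϑ))).add
    continuous_const)

lemma lamR_cont (hδ : 0 < δ) (hκ0 : 0 < κ) (S h lam0 ϑ₀ : ℝ) :
    Continuous fun t => lamR S h lam0 δ κ ϑ₀ t := by
  unfold lamR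
  exact ((continuous_const.mul ((psi_continuous hδ hκ0).comp (continuous_sub_right ϑ₀))).add
    continuous_const)

lemma lamT_pos (hδ : 0 < δ) (hS : 0 ≤ S) (hlam0 : 0 < lam0) (ϑ t : ℝ) :
    0 < lamT S lam0 δ κ ϑ t :=
  add_pos_of_nonneg_of_pos (mul_nonneg hS (psi_nonneg hδ _)) hlam0

lemma lamT_ge (hδ : 0 < δ) (hS : 0 ≤ S) (hlam0 : 0 < lam0) (ϑ t : ℝ) :
    lam0 ≤ lamT S lam0 δ κ ϑ t :=
  le_add_of_nonneg_left (mul_nonneg hS (psi_nonneg hδ _))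

lemma lamR_pos (hδ : 0 < δ) (hSh : 0 ≤ S + h) (hlam0 : 0 < lam0) (ϑ₀ t : ℝ) :
    0 < lamR S h lam0 δ κ ϑ₀ t :=
  add_pos_of_nonneg_of_pos (mul_nonneg hSh (psi_nonneg hδ _)) hlam0

lemma lamR_le (hδ : 0 < δ) (hκ0 : 0 ≤ κ) (hSh : 0 ≤ S + h) (ϑ₀ t : ℝ) :
    lamR S h lam0 δ κ ϑ₀ t ≤ S + h + lam0 := by
  unfold lamR
  have := psi_le_one (κ := κ) hδ hκ0 (t - ϑ₀)
  nlinarith [psi_nonneg (κ := κ) hδ (t - ϑ₀)]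

lemma Fker_cont (hδ : 0 < δ) (hκ0 : 0 < κ) (hS : 0 ≤ S) (hSh : 0 ≤ S + h)
    (hlam0 : 0 < lam0) (ϑ : ℝ) : Continuous fun t => Fker S h lam0 δ κ ϑ₀ ϑ t :=
  cont_phi (lamT_cont hδ hκ0 S lam0 ϑ) (lamR_cont hδ hκ0 S h lam0 ϑ₀)
    (lamT_pos hδ hS hlam0 ϑ) (lamR_pos hδ hSh hlam0 ϑ₀)

lemma Finf_cont (hδ : 0 < δ) (hκ0 : 0 < κ) (hS : 0 < S) (hSh : 0 ≤ S + h)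
    (hlam0 : 0 < lam0) : Continuous fun t => Finf S h lam0 δ κ ϑ₀ t :=
  cont_phi continuous_const (lamR_cont hδ hκ0 S h lam0 ϑ₀)
    (fun _ => by linarith) (lamR_pos hδ hSh hlam0 ϑ₀)

lemma gfun_cont (hδ : 0 < δ) (hκ0 : 0 < κ) (hS : 0 ≤ S) (hlam0 : 0 < lam0) :
    Continuous (gfun S lam0 δ κ) := by
  unfold gfun
  exact cont_phi ((continuous_const.mul (psi_continuous hδ hκ0)).add continuous_const)
    continuous_const
    (fun t => add_pos_of_nonneg_of_pos (mul_nonneg hS (psi_nonneg hδ _)) hlam0)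
    (fun _ => hlam0)

lemma log_abs_sub (hlam0 : 0 < lam0) {a₁ a₂ : ℝ} (h₁ : lam0 ≤ a₁) (h₂ : lam0 ≤ a₂) :
    |Real.log a₁ - Real.log a₂| ≤ |a₁ - a₂| / lam0 := by
  have key : ∀ x y : ℝ, lam0 ≤ x → lam0 ≤ y → y ≤ x →
      Real.log x - Real.log y ≤ (x - y) / lam0 := by
    intro x y hx hy hyx
    have hx0 : 0 < x := lt_of_lt_of_le hlam0 hx
    have hy0 : 0 < y := lt_of_lt_of_le hlam0 hy
    have h1 : Real.log (x / y) ≤ x / y - 1 := Real.log_le_sub_one_of_pos (div_pos hx0 hy0)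
    rw [Real.log_div hx0.ne' hy0.ne'] at h1
    have h2 : x / y - 1 = (x - y) / y := by field_simp
    have h3 : (x - y) / y ≤ (x - y) / lam0 :=
      div_le_div_of_nonneg_left (by linarith) hlam0 hy
    linarith
  rcases le_total a₂ a₁ with hc | hc
  · rw [abs_of_nonneg (sub_nonneg.2
      (Real.log_le_log (lt_of_lt_of_le hlam0 h₂) hc)), abs_of_nonneg (by linarith)]
    exact key a₁ a₂ h₁ h₂ hc
  · rw [abs_sub_comm, abs_sub_comm a₁ a₂, abs_of_nonneg (sub_nonneg.2
      (Real.log_le_log (lt_of_lt_of_le hlam0 h₁) hc)), abs_of_nonneg (by linarith)]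
    exact key a₂ a₁ h₂ h₁ hc

lemma lip (hlam0 : 0 < lam0) {a₁ a₂ b : ℝ} (hb : 0 < b)
    (h₁ : lam0 ≤ a₁) (h₂ : lam0 ≤ a₂) :
    |(a₁ / b - 1 - Real.log (a₁ / b)) * b - (a₂ / b - 1 - Real.log (a₂ / b)) * b|
      ≤ (1 + b / lam0) * |a₁ - a₂| := by
  have ha₁ : 0 < a₁ := lt_of_lt_of_le hlam0 h₁
  have ha₂ : 0 < a₂ := lt_of_lt_of_le hlam0 h₂
  have e : (a₁ / b - 1 - Real.log (a₁ / b)) * b - (a₂ / b - 1 - Real.log (a₂ / b)) * b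
      = (a₁ - a₂) - b * (Real.log a₁ - Real.log a₂) := by
    rw [Real.log_div ha₁.ne' hb.ne', Real.log_div ha₂.ne' hb.ne']
    field_simp
    ring
  rw [e]
  calc |(a₁ - a₂) - b * (Real.log a₁ - Real.log a₂)|
      ≤ |a₁ - a₂| + |b * (Real.log a₁ - Real.log a₂)| := abs_sub _ _
    _ ≤ |a₁ - a₂| + b * (|a₁ - a₂| / lam0) := by
        rw [abs_mul, abs_of_pos hb]
        have := log_abs_sub hlam0 h₁ h₂
        nlinarith
    _ = (1 + b / lam0) * |a₁ - a₂| := by field_simp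

lemma rep1 (hδ : 0 < δ) (hκ0 : 0 < κ) (hS : 0 < S) (hSh : 0 ≤ S + h) (hlam0 : 0 < lam0)
    {ϑ' : ℝ} (h1 : ϑ' ≤ ϑ₀) :
    JKL S h lam0 δ κ τ ϑ₀ ϑ' =
      (∫ u in (0:ℝ)..(ϑ₀ - ϑ'), gfun S lam0 δ κ u) +
        ∫ t in ϑ₀..τ, Fker S h lam0 δ κ ϑ₀ ϑ' t := by
  have hFc := Fker_cont (ϑ₀ := ϑ₀) hδ hκ0 hS.le hSh hlam0 ϑ'
  have e0 : JKL S h lam0 δ κ τ ϑ₀ ϑ' = ∫ t in ϑ'..τ, Fker S h lam0 δ κ ϑ₀ ϑ' t := by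
    unfold JKL Fker
    rw [min_eq_left h1]
  rw [e0, ← intervalIntegral.integral_add_adjacent_intervals
    (hFc.intervalIntegrable ϑ' ϑ₀) (hFc.intervalIntegrable ϑ₀ τ)]
  congr 1
  have e1 : ∫ t in ϑ'..ϑ₀, Fker S h lam0 δ κ ϑ₀ ϑ' t
      = ∫ t in ϑ'..ϑ₀, gfun S lam0 δ κ (t - ϑ') := by
    apply intervalIntegral.integral_congr
    intro t ht
    rw [Set.uIcc_of_le h1] at ht
    have hR : lamR S h lam0 δ κ ϑ₀ t = lam0 := by
      rw [lamR, psi_of_nonpos hδ (by linarith [ht.2]), mul_zero, zero_add]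
    simp only [Fker, gfun, lamT, hR]
  rw [e1, intervalIntegral.integral_comp_sub_right (gfun S lam0 δ κ) ϑ', sub_self]

lemma rep2 (hδ : 0 < δ) {ϑ' : ℝ} (h1 : ϑ' ≤ ϑ₀ - δ) (h2 : ϑ₀ ≤ τ) :
    (∫ t in ϑ₀..τ, Fker S h lam0 δ κ ϑ₀ ϑ' t) = ∫ t in ϑ₀..τ, Finf S h lam0 δ κ ϑ₀ t := by
  apply intervalIntegral.integral_congr
  intro t ht
  rw [Set.uIcc_of_le h2] at ht
  have hone : psi δ κ (t - ϑ') = 1 := psi_of_ge (by linarith [ht.1])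
  simp only [Fker, Finf, lamT, hone, mul_one]

lemma rep3 (hδ : 0 < δ) (hκ0 : 0 < κ) (hS : 0 < S) (hSh : 0 ≤ S + h) (hlam0 : 0 < lam0)
    {ϑ' : ℝ} (h2 : ϑ' + δ ≤ τ) (h3 : ϑ₀ ≤ ϑ' + δ) :
    (∫ t in ϑ₀..τ, Fker S h lam0 δ κ ϑ₀ ϑ' t) - (∫ t in ϑ₀..τ, Finf S h lam0 δ κ ϑ₀ t)
      = ∫ t in ϑ₀..(ϑ' + δ),
          (Fker S h lam0 δ κ ϑ₀ ϑ' t - Finf S h lam0 δ κ ϑ₀ t) := by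
  have hFc := Fker_cont (ϑ₀ := ϑ₀) hδ hκ0 hS.le hSh hlam0 ϑ'
  have hGc := Finf_cont (ϑ₀ := ϑ₀) hδ hκ0 hS hSh hlam0
  have tail : ∫ t in (ϑ' + δ)..τ, Fker S h lam0 δ κ ϑ₀ ϑ' t
      = ∫ t in (ϑ' + δ)..τ, Finf S h lam0 δ κ ϑ₀ t := by
    apply intervalIntegral.integral_congr
    intro t ht
    rw [Set.uIcc_of_le h2] at ht
    have hone : psi δ κ (t - ϑ') = 1 := psi_of_ge (by linarith [ht.1])
    simp only [Fker, Finf, lamT, hone, mul_one]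
  rw [← intervalIntegral.integral_add_adjacent_intervals
      (hFc.intervalIntegrable ϑ₀ (ϑ' + δ)) (hFc.intervalIntegrable (ϑ' + δ) τ),
    ← intervalIntegral.integral_add_adjacent_intervals
      (hGc.intervalIntegrable ϑ₀ (ϑ' + δ)) (hGc.intervalIntegrable (ϑ' + δ) τ),
    tail, intervalIntegral.integral_sub (hFc.intervalIntegrable _ _)
      (hGc.intervalIntegrable _ _)]
  ring

lemma bound (hδ : 0 < δ) (hκ0 : 0 < κ) (hκ1 : κ ≤ 1) (hS : 0 < S) (hSh : 0 ≤ S + h)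
    (hlam0 : 0 < lam0) {ϑ' t : ℝ} (h1 : ϑ₀ - δ < ϑ') (h2 : ϑ' < ϑ₀) (ht : ϑ₀ ≤ t) :
    |Fker S h lam0 δ κ ϑ₀ ϑ' t - Finf S h lam0 δ κ ϑ₀ t|
      ≤ (1 + (S + h + lam0) / lam0) * (S * ((ϑ' - (ϑ₀ - δ)) / δ)) := by
  have hb : 0 < lamR S h lam0 δ κ ϑ₀ t := lamR_pos hδ hSh hlam0 ϑ₀ t
  have ha₁ : lam0 ≤ lamT S lam0 δ κ ϑ' t := lamT_ge hδ hS.le hlam0 ϑ' t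
  have ha₂ : lam0 ≤ S + lam0 := by linarith
  have key := lip hlam0 hb ha₁ ha₂
  have hbR : lamR S h lam0 δ κ ϑ₀ t ≤ S + h + lam0 := lamR_le hδ hκ0.le hSh ϑ₀ t
  have habs : |lamT S lam0 δ κ ϑ' t - (S + lam0)| ≤ S * ((ϑ' - (ϑ₀ - δ)) / δ) := by
    have hle : psi δ κ (t - ϑ') ≤ 1 := psi_le_one hδ hκ0.le _
    have hge : (ϑ₀ - ϑ') / δ ≤ psi δ κ (t - ϑ') :=
      psi_ge hδ hκ0 hκ1 (by linarith) (by linarith) (by linarith)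
    have hsum : (ϑ₀ - ϑ') / δ + (ϑ' - (ϑ₀ - δ)) / δ = 1 := by field_simp; ring
    rw [lamT, abs_of_nonpos (by nlinarith)]
    nlinarith
  simp only [Fker, Finf]
  refine le_trans key ?_
  have h0 : (0:ℝ) ≤ (S + h + lam0) / lam0 := div_nonneg (by linarith) hlam0.le
  exact mul_le_mul (by linarith [(div_le_div_iff_of_pos_right hlam0).2 hbR]) habs (abs_nonneg _)
    (by linarith)

end StmtAux
theorem stmt_0 (S lam0 δ τ κ α β ϑ₀ h : ℝ)
    (hS : 0 < S) (hlam0 : 0 < lam0) (hδ : 0 < δ) (hτ : 0 < τ)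
    (hκ : κ ∈ Set.Ioo (0 : ℝ) (1 / 2)) (hαβ : α < β)
    (hΘ : Set.Ioo (α - δ) (β + δ) ⊆ Set.Ioo 0 (τ - δ))
    (hϑ₀ : ϑ₀ ∈ Set.Ioo α β)
    (hH : S / Real.log (1 + S / lam0) - S - lam0 < h) :
    ∀ ϑ ∈ Set.Ioo (α - δ) (β + δ), ϑ ≤ ϑ₀ - δ →
      HasDerivAt (JKL S h lam0 δ κ τ ϑ₀) (lam0 * Real.log (1 + S / lam0) - S) ϑ ∧
        lam0 * Real.log (1 + S / lam0) - S < 0 := by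
  open StmtAux in
  obtain ⟨hκ0, hκhalf⟩ := hκ
  have hκ1 : κ ≤ 1 := by linarith
  have hratio : (0:ℝ) < 1 + S / lam0 := by positivity
  have hSdiv : (0:ℝ) < S / lam0 := div_pos hS hlam0
  have hlog_lt : Real.log (1 + S / lam0) < S / lam0 := by
    have := Real.log_lt_sub_one_of_pos hratio (by linarith)
    linarith
  have hlog_pos : 0 < Real.log (1 + S / lam0) := Real.log_pos (by linarith)
  have hmul : lam0 * (S / lam0) = S := by field_simp
  have hneg : lam0 * Real.log (1 + S / lam0) - S < 0 := by
    nlinarith [mul_lt_mul_of_pos_left hlog_lt hlam0]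
  have hSh : 0 < S + h := by
    have h1 : lam0 < S / Real.log (1 + S / lam0) := by
      rw [lt_div_iff₀ hlog_pos]
      nlinarith
    linarith
  intro ϑ hmem hle
  refine ⟨?_, hneg⟩
  have hϑ₀mem : ϑ₀ ∈ Set.Ioo (0:ℝ) (τ - δ) :=
    hΘ ⟨by linarith [hϑ₀.1], by linarith [hϑ₀.2]⟩
  have hϑ₀τ : ϑ₀ < τ - δ := hϑ₀mem.2
  -- Step A : derivative of the representative function
  have hgc := gfun_cont (S := S) (lam0 := lam0) (δ := δ) (κ := κ) hδ hκ0 hS.le hlam0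
  have hFTC : HasDerivAt (fun x => ∫ u in (0:ℝ)..x, gfun S lam0 δ κ u)
      (gfun S lam0 δ κ (ϑ₀ - ϑ)) (ϑ₀ - ϑ) :=
    intervalIntegral.integral_hasDerivAt_right (hgc.intervalIntegrable _ _)
      (hgc.stronglyMeasurableAtFilter _ _) hgc.continuousAt
  have hi : HasDerivAt (fun x : ℝ => ϑ₀ - x) (-1) ϑ := (hasDerivAt_id ϑ).const_sub ϑ₀
  have hcomp : HasDerivAt (fun x => ∫ u in (0:ℝ)..(ϑ₀ - x), gfun S lam0 δ κ u)
      (gfun S lam0 δ κ (ϑ₀ - ϑ) * -1) ϑ := hFTC.comp ϑ hi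
  have gval : gfun S lam0 δ κ (ϑ₀ - ϑ) = S - lam0 * Real.log (1 + S / lam0) := by
    rw [gfun, psi_of_ge (by linarith : δ ≤ ϑ₀ - ϑ)]
    have e1 : (S * 1 + lam0) / lam0 = 1 + S / lam0 := by field_simp; ring
    rw [e1]
    have e2 : S / lam0 * lam0 = S := div_mul_cancel₀ S hlam0.ne'
    linear_combination e2
  have hA : HasDerivAt (fun x => (∫ u in (0:ℝ)..(ϑ₀ - x), gfun S lam0 δ κ u) +
        ∫ t in ϑ₀..τ, Finf S h lam0 δ κ ϑ₀ t)
      (lam0 * Real.log (1 + S / lam0) - S) ϑ := by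
    have := hcomp.add_const (∫ t in ϑ₀..τ, Finf S h lam0 δ κ ϑ₀ t)
    rwa [show gfun S lam0 δ κ (ϑ₀ - ϑ) * -1 = lam0 * Real.log (1 + S / lam0) - S from by
      rw [gval]; ring] at this
  -- Step B : the error term has vanishing derivative
  have hA0 : (0:ℝ) ≤ (S + h + lam0) / lam0 := div_nonneg (by linarith) hlam0.le
  have hM : (0:ℝ) < (1 + (S + h + lam0) / lam0) * S / δ :=
    div_pos (mul_pos (by linarith) hS) hδ
  set M : ℝ := (1 + (S + h + lam0) / lam0) * S / δ with hMdef
  have hDbound : ∀ x ∈ Set.Iio ϑ₀,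
      |JKL S h lam0 δ κ τ ϑ₀ x - ((∫ u in (0:ℝ)..(ϑ₀ - x), gfun S lam0 δ κ u) +
        ∫ t in ϑ₀..τ, Finf S h lam0 δ κ ϑ₀ t)| ≤ M * (x - ϑ) ^ 2 := by
    intro x hx
    have hx0 : x < ϑ₀ := hx
    rcases le_or_gt x (ϑ₀ - δ) with hcase | hcase
    · rw [rep1 hδ hκ0 hS hSh.le hlam0 hx0.le, rep2 hδ hcase (by linarith)]
      have : (0:ℝ) ≤ M * (x - ϑ) ^ 2 := mul_nonneg hM.le (sq_nonneg _)
      simpa using this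
    · have hτx : x + δ ≤ τ := by linarith
      rw [rep1 hδ hκ0 hS hSh.le hlam0 hx0.le]
      have e3 : (∫ u in (0:ℝ)..(ϑ₀ - x), gfun S lam0 δ κ u) +
          (∫ t in ϑ₀..τ, Fker S h lam0 δ κ ϑ₀ x t) -
          ((∫ u in (0:ℝ)..(ϑ₀ - x), gfun S lam0 δ κ u) +
            ∫ t in ϑ₀..τ, Finf S h lam0 δ κ ϑ₀ t) =
          (∫ t in ϑ₀..τ, Fker S h lam0 δ κ ϑ₀ x t) -
            ∫ t in ϑ₀..τ, Finf S h lam0 δ κ ϑ₀ t := by ring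
      rw [e3, rep3 hδ hκ0 hS hSh.le hlam0 hτx (by linarith)]
      have key : ‖∫ t in ϑ₀..(x + δ),
          (Fker S h lam0 δ κ ϑ₀ x t - Finf S h lam0 δ κ ϑ₀ t)‖ ≤
          ((1 + (S + h + lam0) / lam0) * (S * ((x - (ϑ₀ - δ)) / δ))) * |x + δ - ϑ₀| := by
        apply intervalIntegral.norm_integral_le_of_norm_le_const
        intro t ht
        rw [Set.uIoc_of_le (by linarith)] at ht
        rw [Real.norm_eq_abs]
        exact bound hδ hκ0 hκ1 hS hSh.le hlam0 hcase hx0 ht.1.le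
      rw [Real.norm_eq_abs] at key
      refine le_trans key ?_
      have hε : 0 < x - (ϑ₀ - δ) := by linarith
      have hεle : x - (ϑ₀ - δ) ≤ x - ϑ := by linarith
      rw [abs_of_pos (by linarith : (0:ℝ) < x + δ - ϑ₀)]
      have eM : (1 + (S + h + lam0) / lam0) * (S * ((x - (ϑ₀ - δ)) / δ)) * (x + δ - ϑ₀)
          = M * (x - (ϑ₀ - δ)) ^ 2 := by
        rw [hMdef]
        have : x + δ - ϑ₀ = x - (ϑ₀ - δ) := by ring
        rw [this]
        field_simp
      rw [eM]
      exact mul_le_mul_of_nonneg_left (pow_le_pow_left₀ hε.le hεle 2) hM.le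
  have hDzero : JKL S h lam0 δ κ τ ϑ₀ ϑ - ((∫ u in (0:ℝ)..(ϑ₀ - ϑ), gfun S lam0 δ κ u) +
      ∫ t in ϑ₀..τ, Finf S h lam0 δ κ ϑ₀ t) = 0 := by
    rw [rep1 hδ hκ0 hS hSh.le hlam0 (by linarith), rep2 hδ hle (by linarith)]
    ring
  have hD : HasDerivAt (fun x => JKL S h lam0 δ κ τ ϑ₀ x -
      ((∫ u in (0:ℝ)..(ϑ₀ - x), gfun S lam0 δ κ u) +
        ∫ t in ϑ₀..τ, Finf S h lam0 δ κ ϑ₀ t)) 0 ϑ := by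
    rw [hasDerivAt_iff_isLittleO]
    simp only [smul_zero, sub_zero, hDzero]
    rw [Asymptotics.isLittleO_iff]
    intro c hc
    have hMc : M * (c / M) = c := by field_simp
    filter_upwards [eventually_abs_sub_lt ϑ (div_pos hc hM),
      Iio_mem_nhds (show ϑ < ϑ₀ by linarith)] with x h1 h2
    rw [Real.norm_eq_abs, Real.norm_eq_abs]
    calc |JKL S h lam0 δ κ τ ϑ₀ x - ((∫ u in (0:ℝ)..(ϑ₀ - x), gfun S lam0 δ κ u) +
          ∫ t in ϑ₀..τ, Finf S h lam0 δ κ ϑ₀ t)|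
        ≤ M * (x - ϑ) ^ 2 := hDbound x h2
      _ = M * |x - ϑ| * |x - ϑ| := by rw [sq, ← abs_mul_abs_self]; ring
      _ ≤ c * |x - ϑ| := by nlinarith [abs_nonneg (x - ϑ),
          mul_lt_mul_of_pos_left h1 hM, hMc]
  have h2 : JKL S h lam0 δ κ τ ϑ₀ =ᶠ[nhds ϑ]
      (fun x => ((∫ u in (0:ℝ)..(ϑ₀ - x), gfun S lam0 δ κ u) +
          ∫ t in ϑ₀..τ, Finf S h lam0 δ κ ϑ₀ t) +
        (JKL S h lam0 δ κ τ ϑ₀ x -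
          ((∫ u in (0:ℝ)..(ϑ₀ - x), gfun S lam0 δ κ u) +
            ∫ t in ϑ₀..τ, Finf S h lam0 δ κ ϑ₀ t))) :=
    Filter.Eventually.of_forall fun x => by ring
  simpa using (hA.add hD).congr_of_eventuallyEq h2
end

section
/- Suppose h ∈ 𝓗. Then for every ϑ ∈ Θ with ϑ ≥ ϑ₀ + δ, the Kullback–Leibler divergence J is differentiable at ϑ with J′(ϑ) = (S + h + λ₀)·ln(1 + S/λ₀) − S, and this value is strictly positive. -/
open MeasureTheory Real Set Filter

lemma psi_of_nonpos {δ κ x : ℝ} (hδ : 0 < δ) (hx : x ≤ 0) : psi δ κ x = 0 := by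
  unfold psi
  rw [if_neg (by linarith), if_neg (by linarith)]

lemma psi_of_ge {δ κ x : ℝ} (hx : δ ≤ x) : psi δ κ x = 1 := by
  unfold psi; rw [if_pos hx]

lemma psi_nonneg {δ κ : ℝ} (hδ : 0 < δ) (x : ℝ) : 0 ≤ psi δ κ x := by
  unfold psi
  split_ifs with h1 h2
  · norm_num
  · exact Real.rpow_nonneg (div_nonneg h2.le hδ.le) κ
  · exact le_refl 0

lemma psi_le_one {δ κ : ℝ} (hδ : 0 < δ) (hκ : 0 < κ) (x : ℝ) : psi δ κ x ≤ 1 := by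
  unfold psi
  split_ifs with h1 h2
  · exact le_refl 1
  · exact Real.rpow_le_one (div_nonneg h2.le hδ.le) (by
      rw [div_le_one hδ]; linarith) hκ.le
  · norm_num

lemma psi_continuous {δ κ : ℝ} (hδ : 0 < δ) (hκ : 0 < κ) : Continuous (psi δ κ) := by
  have h1 : psi δ κ = fun x => (max 0 (min x δ) / δ) ^ κ := by
    funext x
    unfold psi
    split_ifs with h1 h2
    · rw [min_eq_right h1, max_eq_right hδ.le, div_self hδ.ne', Real.one_rpow]
    · rw [min_eq_left (le_of_not_ge h1), max_eq_right h2.le]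
    · push_neg at h2
      rw [min_eq_left (by linarith), max_eq_left h2, zero_div,
        Real.zero_rpow hκ.ne']
  rw [h1]
  exact ((continuous_const.max (continuous_id.min continuous_const)).div_const δ).rpow_const
    (fun x => Or.inr hκ.le)

lemma one_sub_psi_le {δ κ u : ℝ} (hδ : 0 < δ) (hκ1 : κ ≤ 1) (hu0 : 0 ≤ u) (huδ : u ≤ δ) :
    1 - psi δ κ u ≤ (δ - u) / δ := by
  unfold psi
  split_ifs with h1 h2
  · have : 0 ≤ (δ - u) / δ := div_nonneg (by linarith) hδ.le
    linarith
  · have hx : u / δ ≤ (u / δ) ^ κ := by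
      have h3 := Real.rpow_le_rpow_of_exponent_ge (div_pos h2 hδ)
        (by rw [div_le_one hδ]; exact huδ) hκ1
      rwa [Real.rpow_one] at h3
    have h4 : (δ - u) / δ = 1 - u / δ := by field_simp
    linarith
  · push_neg at h2
    have h5 : u = 0 := le_antisymm h2 hu0
    simp [h5, div_self hδ.ne']

noncomputable def g2 (l y : ℝ) : ℝ := (l / y - 1 - Real.log (l / y)) * y

lemma g2_eq {l y : ℝ} (hl : 0 < l) (hy : 0 < y) :
    g2 l y = l - y - (Real.log l - Real.log y) * y := by
  unfold g2
  rw [Real.log_div hl.ne' hy.ne']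
  field_simp

lemma g2_lip {l a b M : ℝ} (hl : 0 < l) (ha : 0 < a) (hab : a ≤ b)
    (hM : ∀ y ∈ Set.Icc a b, |Real.log y - Real.log l| ≤ M) :
    |g2 l b - g2 l a| ≤ M * (b - a) := by
  set f : ℝ → ℝ := fun y => l - y - (Real.log l - Real.log y) * y with hf
  have hd : ∀ y ∈ Set.Icc a b, HasDerivWithinAt f (Real.log y - Real.log l) (Set.Icc a b) y := by
    intro y hy
    have hy0 : 0 < y := lt_of_lt_of_le ha hy.1
    have h1 : HasDerivAt (fun y => (Real.log l - Real.log y) * y)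
        ((-y⁻¹) * y + (Real.log l - Real.log y) * 1) y :=
      ((Real.hasDerivAt_log hy0.ne').const_sub (Real.log l)).mul (hasDerivAt_id y)
    have h2 : HasDerivAt f ((0 - 1) - ((-y⁻¹) * y + (Real.log l - Real.log y) * 1)) y :=
      ((hasDerivAt_const y l).sub (hasDerivAt_id y)).sub h1
    have h3 : (0 - 1) - ((-y⁻¹) * y + (Real.log l - Real.log y) * 1)
        = Real.log y - Real.log l := by
      field_simp
      ring
    rw [h3] at h2
    exact h2.hasDerivWithinAt
  have hbound : ∀ y ∈ Set.Icc a b, ‖Real.log y - Real.log l‖ ≤ M := by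
    intro y hy
    simpa [Real.norm_eq_abs] using hM y hy
  have := (convex_Icc a b).norm_image_sub_le_of_norm_hasDerivWithin_le hd hbound
    (Set.left_mem_Icc.mpr hab) (Set.right_mem_Icc.mpr hab)
  rw [g2_eq hl (lt_of_lt_of_le ha hab), g2_eq hl ha]
  simpa [Real.norm_eq_abs, abs_of_nonneg (sub_nonneg.mpr hab)] using this

set_option maxHeartbeats 1000000 in
theorem stmt_1 (S lam0 δ τ κ α β ϑ₀ h : ℝ)
    (hS : 0 < S) (hlam0 : 0 < lam0) (hδ : 0 < δ) (hτ : 0 < τ)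
    (hκ : κ ∈ Set.Ioo (0 : ℝ) (1 / 2)) (hαβ : α < β)
    (hΘ : Set.Ioo (α - δ) (β + δ) ⊆ Set.Ioo 0 (τ - δ))
    (hϑ₀ : ϑ₀ ∈ Set.Ioo α β)
    (hH : S / Real.log (1 + S / lam0) - S - lam0 < h) :
    ∀ ϑ ∈ Set.Ioo (α - δ) (β + δ), ϑ₀ + δ ≤ ϑ →
      HasDerivAt (JKL S h lam0 δ κ τ ϑ₀)
        ((S + h + lam0) * Real.log (1 + S / lam0) - S) ϑ ∧
        0 < (S + h + lam0) * Real.log (1 + S / lam0) - S := by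
  intro ϑ hϑ hge
  obtain ⟨hκ0, hκh⟩ := hκ
  have hκ1 : κ ≤ 1 := by linarith
  have hϑ₀Θ : ϑ₀ ∈ Set.Ioo (0:ℝ) (τ - δ) := hΘ ⟨by linarith [hϑ₀.1], by linarith [hϑ₀.2]⟩
  have hϑ₀0 : 0 < ϑ₀ := hϑ₀Θ.1
  have hϑ₀τ : ϑ₀ < τ - δ := hϑ₀Θ.2
  have hϑτ : ϑ < τ - δ := (hΘ hϑ).2
  have hϑ0 : ϑ₀ < ϑ := by linarith
  set L := Real.log (1 + S / lam0) with hLdef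
  have hSl : 0 < S / lam0 := div_pos hS hlam0
  have hL : 0 < L := Real.log_pos (by linarith)
  have hSlam0L : lam0 * L < S := by
    have h1 : L < 1 + S / lam0 - 1 :=
      Real.log_lt_sub_one_of_pos (by linarith) (by linarith)
    have h2 : lam0 * L < lam0 * (S / lam0) :=
      mul_lt_mul_of_pos_left (by linarith) hlam0
    rwa [mul_div_cancel₀ _ hlam0.ne'] at h2
  have hSh : 0 < S + h := by
    have h2 : lam0 < S / L := (lt_div_iff₀ hL).mpr (by linarith)
    linarith
  have hA : 0 < S + h + lam0 := by linarith
  set A := S + h + lam0 with hAdef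
  have hlam0A : lam0 ≤ A := by rw [hAdef]; linarith
  have hm : 0 < A * L - S := by
    have h3 : S / L < A := by rw [hAdef]; linarith
    have h4 := (div_lt_iff₀ hL).mp h3
    linarith
  have hlog : ∀ {a b : ℝ}, 0 < a → a ≤ b → Real.log a ≤ Real.log b :=
    fun ha hab => (Real.log_le_log_iff ha (lt_of_lt_of_le ha hab)).mpr hab
  -- continuity and bounds
  have hψc := psi_continuous hδ hκ0
  have hlamTc : ∀ x, Continuous (fun t => lamT S lam0 δ κ x t) := by
    intro x
    unfold lamT
    exact (continuous_const.mul (hψc.comp (continuous_id.sub continuous_const))).add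
      continuous_const
  have hlamRc : Continuous (fun t => lamR S h lam0 δ κ ϑ₀ t) := by
    unfold lamR
    exact (continuous_const.mul (hψc.comp (continuous_id.sub continuous_const))).add
      continuous_const
  have hlamT_ge : ∀ x t, lam0 ≤ lamT S lam0 δ κ x t := by
    intro x t
    unfold lamT
    nlinarith [psi_nonneg (κ := κ) hδ (t - x)]
  have hlamT_le : ∀ x t, lamT S lam0 δ κ x t ≤ S + lam0 := by
    intro x t
    unfold lamT
    nlinarith [psi_le_one hδ hκ0 (t - x)]
  have hlamT_pos : ∀ x t, 0 < lamT S lam0 δ κ x t :=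
    fun x t => lt_of_lt_of_le hlam0 (hlamT_ge x t)
  have hlamR_ge : ∀ t, lam0 ≤ lamR S h lam0 δ κ ϑ₀ t := by
    intro t
    unfold lamR
    nlinarith [psi_nonneg (κ := κ) hδ (t - ϑ₀)]
  have hlamR_le : ∀ t, lamR S h lam0 δ κ ϑ₀ t ≤ A := by
    intro t
    unfold lamR
    rw [hAdef]
    nlinarith [psi_le_one hδ hκ0 (t - ϑ₀)]
  have hlamR_pos : ∀ t, 0 < lamR S h lam0 δ κ ϑ₀ t :=
    fun t => lt_of_lt_of_le hlam0 (hlamR_ge t)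
  have hJ : ∀ x, JKL S h lam0 δ κ τ ϑ₀ x
      = ∫ t in (min x ϑ₀)..τ, g2 (lamT S lam0 δ κ x t) (lamR S h lam0 δ κ ϑ₀ t) := by
    intro x
    simp only [JKL, g2]
  have hFc : ∀ x, Continuous (fun t => g2 (lamT S lam0 δ κ x t) (lamR S h lam0 δ κ ϑ₀ t)) := by
    intro x
    unfold g2
    have hdiv : Continuous (fun t => lamT S lam0 δ κ x t / lamR S h lam0 δ κ ϑ₀ t) :=
      (hlamTc x).div hlamRc (fun t => (hlamR_pos t).ne')
    exact ((hdiv.sub continuous_const).sub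
      (hdiv.log (fun t => (div_pos (hlamT_pos x t) (hlamR_pos t)).ne'))).mul hlamRc
  have hF2c : ∀ x, Continuous (fun t => g2 (lamT S lam0 δ κ x t) A) := by
    intro x
    unfold g2
    have hdiv : Continuous (fun t => lamT S lam0 δ κ x t / A) := (hlamTc x).div_const A
    exact ((hdiv.sub continuous_const).sub
      (hdiv.log (fun t => (div_pos (hlamT_pos x t) hA).ne'))).mul continuous_const
  have hGc : Continuous (fun t => g2 lam0 (lamR S h lam0 δ κ ϑ₀ t)) := by
    unfold g2
    have hdiv : Continuous (fun t => lam0 / lamR S h lam0 δ κ ϑ₀ t) :=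
      continuous_const.div hlamRc (fun t => (hlamR_pos t).ne')
    exact ((hdiv.sub continuous_const).sub
      (hdiv.log (fun t => (div_pos hlam0 (hlamR_pos t)).ne'))).mul hlamRc
  set M := (Real.log A - Real.log lam0) + (Real.log (S + lam0) - Real.log lam0) with hMdef
  have hM0 : 0 ≤ M := by
    have h1 := hlog hlam0 hlam0A
    have h2 := hlog hlam0 (show lam0 ≤ S + lam0 by linarith)
    rw [hMdef]; linarith
  set K := M * (S + h) / δ with hKdef
  have hK0 : 0 ≤ K := by rw [hKdef]; positivity
  set C := ∫ u in (0:ℝ)..δ, g2 (S * psi δ κ u + lam0) A with hCdef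
  set c₂ := g2 (S + lam0) A with hc2def
  set G : ℝ → ℝ := fun t => g2 lam0 (lamR S h lam0 δ κ ϑ₀ t) with hGdef
  set φ : ℝ → ℝ := fun x => (∫ t in ϑ₀..x, G t) + C + c₂ * (τ - δ - x) with hφdef
  -- key estimate
  have key : ∀ x ∈ Set.Ioo ϑ₀ (τ - δ),
      |JKL S h lam0 δ κ τ ϑ₀ x - φ x| ≤ K / 2 * (max (ϑ₀ + δ - x) 0) ^ 2 := by
    intro x hx
    have hxτ : x + δ < τ := by linarith [hx.2]
    have hi1 : IntervalIntegrable
        (fun t => g2 (lamT S lam0 δ κ x t) (lamR S h lam0 δ κ ϑ₀ t)) volume ϑ₀ x :=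
      (hFc x).intervalIntegrable _ _
    have hi2 : IntervalIntegrable
        (fun t => g2 (lamT S lam0 δ κ x t) (lamR S h lam0 δ κ ϑ₀ t)) volume x (x + δ) :=
      (hFc x).intervalIntegrable _ _
    have hi3 : IntervalIntegrable
        (fun t => g2 (lamT S lam0 δ κ x t) (lamR S h lam0 δ κ ϑ₀ t)) volume (x + δ) τ :=
      (hFc x).intervalIntegrable _ _
    have hi2A : IntervalIntegrable (fun t => g2 (lamT S lam0 δ κ x t) A) volume x (x + δ) :=
      (hF2c x).intervalIntegrable _ _
    have hsplit : JKL S h lam0 δ κ τ ϑ₀ x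
        = (∫ t in ϑ₀..x, g2 (lamT S lam0 δ κ x t) (lamR S h lam0 δ κ ϑ₀ t))
          + (∫ t in x..x + δ, g2 (lamT S lam0 δ κ x t) (lamR S h lam0 δ κ ϑ₀ t))
          + (∫ t in x + δ..τ, g2 (lamT S lam0 δ κ x t) (lamR S h lam0 δ κ ϑ₀ t)) := by
      rw [hJ x, min_eq_right hx.1.le,
        ← intervalIntegral.integral_add_adjacent_intervals (hi1.trans hi2) hi3,
        ← intervalIntegral.integral_add_adjacent_intervals hi1 hi2]
    have hp1 : (∫ t in ϑ₀..x, g2 (lamT S lam0 δ κ x t) (lamR S h lam0 δ κ ϑ₀ t))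
        = ∫ t in ϑ₀..x, G t := by
      apply intervalIntegral.integral_congr
      intro t ht
      rw [Set.uIcc_of_le hx.1.le] at ht
      have h0 : psi δ κ (t - x) = 0 := psi_of_nonpos hδ (by linarith [ht.2])
      show g2 (lamT S lam0 δ κ x t) _ = _
      rw [hGdef]
      unfold lamT
      rw [h0, mul_zero, zero_add]
    have hp3 : (∫ t in x + δ..τ, g2 (lamT S lam0 δ κ x t) (lamR S h lam0 δ κ ϑ₀ t))
        = c₂ * (τ - δ - x) := by
      have hcongr : ∀ t ∈ Set.uIcc (x + δ) τ,
          g2 (lamT S lam0 δ κ x t) (lamR S h lam0 δ κ ϑ₀ t) = c₂ := by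
        intro t ht
        rw [Set.uIcc_of_le hxτ.le] at ht
        have h1 : psi δ κ (t - x) = 1 := psi_of_ge (by linarith [ht.1])
        have h2 : psi δ κ (t - ϑ₀) = 1 := psi_of_ge (by linarith [ht.1, hx.1])
        unfold lamT lamR
        rw [h1, h2, mul_one, mul_one, hc2def, hAdef]
      rw [intervalIntegral.integral_congr hcongr, intervalIntegral.integral_const, smul_eq_mul]
      ring
    have hmid : (∫ t in x..x + δ, g2 (lamT S lam0 δ κ x t) A) = C := by
      have hcs := intervalIntegral.integral_comp_sub_right (a := x) (b := x + δ)
        (fun u => g2 (S * psi δ κ u + lam0) A) x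
      rw [show x - x = (0:ℝ) by ring, show x + δ - x = δ by ring] at hcs
      rw [hCdef]
      exact hcs
    have hdiffeq : JKL S h lam0 δ κ τ ϑ₀ x - φ x
        = ∫ t in x..x + δ,
            (g2 (lamT S lam0 δ κ x t) (lamR S h lam0 δ κ ϑ₀ t)
              - g2 (lamT S lam0 δ κ x t) A) := by
      rw [intervalIntegral.integral_sub hi2 hi2A, hmid, hsplit, hp1, hp3]
      simp only [hφdef]
      ring
    rw [hdiffeq]
    rcases le_or_gt (ϑ₀ + δ) x with hcase | hcase
    · have hz : ∀ t ∈ Set.uIcc x (x + δ),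
          (g2 (lamT S lam0 δ κ x t) (lamR S h lam0 δ κ ϑ₀ t)
            - g2 (lamT S lam0 δ κ x t) A) = (fun _ => (0:ℝ)) t := by
        intro t ht
        rw [Set.uIcc_of_le (by linarith)] at ht
        have h2 : psi δ κ (t - ϑ₀) = 1 := psi_of_ge (by linarith [ht.1])
        unfold lamR
        rw [h2, mul_one, hAdef, sub_self]
      rw [intervalIntegral.integral_congr hz]
      simp only [intervalIntegral.integral_const, smul_eq_mul, mul_zero, abs_zero]
      exact mul_nonneg (by linarith) (pow_nonneg (le_max_right _ _) 2)
    · have hmax : max (ϑ₀ + δ - x) 0 = ϑ₀ + δ - x := max_eq_left (by linarith)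
      have hxc : x ≤ ϑ₀ + δ := hcase.le
      have hiD1 : IntervalIntegrable
          (fun t => g2 (lamT S lam0 δ κ x t) (lamR S h lam0 δ κ ϑ₀ t)
            - g2 (lamT S lam0 δ κ x t) A) volume x (ϑ₀ + δ) :=
        ((hFc x).sub (hF2c x)).intervalIntegrable _ _
      have hiD2 : IntervalIntegrable
          (fun t => g2 (lamT S lam0 δ κ x t) (lamR S h lam0 δ κ ϑ₀ t)
            - g2 (lamT S lam0 δ κ x t) A) volume (ϑ₀ + δ) (x + δ) :=
        ((hFc x).sub (hF2c x)).intervalIntegrable _ _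
      have hzero2 : (∫ t in ϑ₀ + δ..x + δ,
          (g2 (lamT S lam0 δ κ x t) (lamR S h lam0 δ κ ϑ₀ t)
            - g2 (lamT S lam0 δ κ x t) A)) = 0 := by
        have hz : ∀ t ∈ Set.uIcc (ϑ₀ + δ) (x + δ),
            (g2 (lamT S lam0 δ κ x t) (lamR S h lam0 δ κ ϑ₀ t)
              - g2 (lamT S lam0 δ κ x t) A) = (fun _ => (0:ℝ)) t := by
          intro t ht
          rw [Set.uIcc_of_le (by linarith [hx.1])] at ht
          have h2 : psi δ κ (t - ϑ₀) = 1 := psi_of_ge (by linarith [ht.1])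
          unfold lamR
          rw [h2, mul_one, hAdef, sub_self]
        rw [intervalIntegral.integral_congr hz]
        simp
      have hsplit2 : (∫ t in x..x + δ,
          (g2 (lamT S lam0 δ κ x t) (lamR S h lam0 δ κ ϑ₀ t)
            - g2 (lamT S lam0 δ κ x t) A))
          = ∫ t in x..ϑ₀ + δ,
          (g2 (lamT S lam0 δ κ x t) (lamR S h lam0 δ κ ϑ₀ t)
            - g2 (lamT S lam0 δ κ x t) A) := by
        rw [← intervalIntegral.integral_add_adjacent_intervals hiD1 hiD2, hzero2, add_zero]
      rw [hsplit2]
      have hbd : ∀ t ∈ Set.Icc x (ϑ₀ + δ),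
          |g2 (lamT S lam0 δ κ x t) (lamR S h lam0 δ κ ϑ₀ t)
            - g2 (lamT S lam0 δ κ x t) A| ≤ K * (ϑ₀ + δ - t) := by
        intro t ht
        have hl0 : 0 < lamT S lam0 δ κ x t := hlamT_pos x t
        have hy0 : 0 < lamR S h lam0 δ κ ϑ₀ t := hlamR_pos t
        have hyA : lamR S h lam0 δ κ ϑ₀ t ≤ A := hlamR_le t
        have hMb : ∀ z ∈ Set.Icc (lamR S h lam0 δ κ ϑ₀ t) A,
            |Real.log z - Real.log (lamT S lam0 δ κ x t)| ≤ M := by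
          intro z hz
          have hz0 : 0 < z := lt_of_lt_of_le hy0 hz.1
          have e1 : Real.log z ≤ Real.log A := hlog hz0 hz.2
          have e2 : Real.log lam0 ≤ Real.log z :=
            hlog hlam0 (le_trans (hlamR_ge t) hz.1)
          have e3 : Real.log lam0 ≤ Real.log (lamT S lam0 δ κ x t) :=
            hlog hlam0 (hlamT_ge x t)
          have e4 : Real.log (lamT S lam0 δ κ x t) ≤ Real.log (S + lam0) :=
            hlog hl0 (hlamT_le x t)
          rw [abs_le]
          constructor
          · rw [hMdef]; linarith
          · rw [hMdef]; linarith
        have hlip := g2_lip hl0 hy0 hyA hMb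
        have hub : A - lamR S h lam0 δ κ ϑ₀ t ≤ (S + h) * ((ϑ₀ + δ - t) / δ) := by
          have hp := one_sub_psi_le (u := t - ϑ₀) hδ hκ1
            (by linarith [ht.1, hx.1]) (by linarith [ht.2])
          have he : A - lamR S h lam0 δ κ ϑ₀ t = (S + h) * (1 - psi δ κ (t - ϑ₀)) := by
            unfold lamR
            rw [hAdef]
            ring
          rw [he]
          calc (S + h) * (1 - psi δ κ (t - ϑ₀))
              ≤ (S + h) * ((δ - (t - ϑ₀)) / δ) := mul_le_mul_of_nonneg_left hp hSh.le
            _ = (S + h) * ((ϑ₀ + δ - t) / δ) := by ring_nf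
        calc |g2 (lamT S lam0 δ κ x t) (lamR S h lam0 δ κ ϑ₀ t)
              - g2 (lamT S lam0 δ κ x t) A|
            = |g2 (lamT S lam0 δ κ x t) A
              - g2 (lamT S lam0 δ κ x t) (lamR S h lam0 δ κ ϑ₀ t)| := abs_sub_comm _ _
          _ ≤ M * (A - lamR S h lam0 δ κ ϑ₀ t) := hlip
          _ ≤ M * ((S + h) * ((ϑ₀ + δ - t) / δ)) := mul_le_mul_of_nonneg_left hub hM0
          _ = K * (ϑ₀ + δ - t) := by rw [hKdef]; field_simp
      have hKint : IntervalIntegrable (fun t => K * (ϑ₀ + δ - t)) volume x (ϑ₀ + δ) :=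
        (continuous_const.mul (continuous_const.sub continuous_id)).intervalIntegrable _ _
      have hae : ∀ᵐ t ∂(volume.restrict (Set.uIoc x (ϑ₀ + δ))),
          ‖g2 (lamT S lam0 δ κ x t) (lamR S h lam0 δ κ ϑ₀ t)
            - g2 (lamT S lam0 δ κ x t) A‖ ≤ K * (ϑ₀ + δ - t) := by
        filter_upwards [ae_restrict_mem measurableSet_uIoc] with t ht
        have ht' : t ∈ Set.Icc x (ϑ₀ + δ) := by
          rw [Set.uIoc_of_le hxc] at ht
          exact ⟨ht.1.le, ht.2⟩
        simpa [Real.norm_eq_abs] using hbd t ht'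
      have hnorm := intervalIntegral.norm_integral_le_of_norm_le hxc
        (by rw [← Set.uIoc_of_le hxc]; exact (ae_restrict_iff' measurableSet_uIoc).mp hae) hKint
      have hcalc : (∫ t in x..ϑ₀ + δ, K * (ϑ₀ + δ - t)) = K / 2 * (ϑ₀ + δ - x) ^ 2 := by
        rw [intervalIntegral.integral_const_mul,
          intervalIntegral.integral_sub intervalIntegrable_const
            intervalIntegral.intervalIntegrable_id,
          intervalIntegral.integral_const, integral_id, smul_eq_mul]
        ring
      rw [hmax]
      calc |∫ t in x..ϑ₀ + δ,
            (g2 (lamT S lam0 δ κ x t) (lamR S h lam0 δ κ ϑ₀ t)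
              - g2 (lamT S lam0 δ κ x t) A)|
          ≤ |∫ t in x..ϑ₀ + δ, K * (ϑ₀ + δ - t)| := by
            simpa [Real.norm_eq_abs] using hnorm.trans (le_abs_self _)
        _ = K / 2 * (ϑ₀ + δ - x) ^ 2 := by
            rw [hcalc, abs_of_nonneg (by positivity)]
  -- derivative of φ
  have hGθ : G ϑ = g2 lam0 A := by
    rw [hGdef]
    show g2 lam0 (lamR S h lam0 δ κ ϑ₀ ϑ) = g2 lam0 A
    unfold lamR
    rw [psi_of_ge (by linarith), mul_one, hAdef]
  have hφd : HasDerivAt φ (g2 lam0 A - c₂) ϑ := by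
    have h1 : HasDerivAt (fun x => ∫ t in ϑ₀..x, G t) (G ϑ) ϑ :=
      intervalIntegral.integral_hasDerivAt_right (hGc.intervalIntegrable _ _)
        (hGc.stronglyMeasurableAtFilter _ _) hGc.continuousAt
    have h2 : HasDerivAt (fun x => c₂ * (τ - δ - x)) (c₂ * (0 - 1)) ϑ :=
      (((hasDerivAt_const ϑ (τ - δ)).sub (hasDerivAt_id ϑ))).const_mul c₂
    have h3 := (h1.add_const C).add h2
    rw [hφdef]
    have h4 : g2 lam0 A - c₂ = G ϑ + c₂ * (0 - 1) := by rw [hGθ]; ring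
    rw [h4]
    exact h3
  -- derivative of the remainder
  have hJφϑ : JKL S h lam0 δ κ τ ϑ₀ ϑ - φ ϑ = 0 := by
    have hk := key ϑ ⟨hϑ0, hϑτ⟩
    rw [max_eq_right (by linarith)] at hk
    have : |JKL S h lam0 δ κ τ ϑ₀ ϑ - φ ϑ| ≤ 0 := by simpa using hk
    exact abs_eq_zero.mp (le_antisymm this (abs_nonneg _))
  have hRd : HasDerivAt (fun x => JKL S h lam0 δ κ τ ϑ₀ x - φ x) 0 ϑ := by
    rw [hasDerivAt_iff_isLittleO, hJφϑ]
    have hbig : (fun x => JKL S h lam0 δ κ τ ϑ₀ x - φ x) =O[nhds ϑ] (fun x => (x - ϑ) ^ 2) := by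
      apply Asymptotics.IsBigO.of_bound (K / 2)
      filter_upwards [Ioo_mem_nhds hϑ0 hϑτ] with x hx
      have hk := key x hx
      have hmle : max (ϑ₀ + δ - x) 0 ≤ |x - ϑ| := by
        apply max_le _ (abs_nonneg _)
        have : ϑ₀ + δ - x ≤ ϑ - x := by linarith
        calc ϑ₀ + δ - x ≤ ϑ - x := this
          _ ≤ |ϑ - x| := le_abs_self _
          _ = |x - ϑ| := abs_sub_comm _ _
      have hsq : (max (ϑ₀ + δ - x) 0) ^ 2 ≤ (x - ϑ) ^ 2 := by
        have := pow_le_pow_left₀ (le_max_right _ _) hmle 2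
        rwa [sq_abs] at this
      calc ‖JKL S h lam0 δ κ τ ϑ₀ x - φ x‖
          ≤ K / 2 * (max (ϑ₀ + δ - x) 0) ^ 2 := by simpa [Real.norm_eq_abs] using hk
        _ ≤ K / 2 * (x - ϑ) ^ 2 := mul_le_mul_of_nonneg_left hsq (by linarith)
        _ = K / 2 * ‖(x - ϑ) ^ 2‖ := by
            rw [Real.norm_eq_abs, abs_of_nonneg (sq_nonneg _)]
    have hsmall : (fun x : ℝ => (x - ϑ) ^ 2) =o[nhds ϑ] (fun x => x - ϑ) := by
      have h1 : (fun x : ℝ => x - ϑ) =o[nhds ϑ] (fun _ => (1:ℝ)) := by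
        rw [Asymptotics.isLittleO_one_iff]
        have := (continuous_sub_right ϑ).tendsto ϑ
        simpa using this
      have h2 := h1.mul_isBigO (Asymptotics.isBigO_refl (fun x : ℝ => x - ϑ) (nhds ϑ))
      simpa [sq] using h2
    have := hbig.trans_isLittleO hsmall
    simpa using this
  have hJd := hRd.add hφd
  have hfe : (fun x => (JKL S h lam0 δ κ τ ϑ₀ x - φ x) + φ x) = JKL S h lam0 δ κ τ ϑ₀ := by
    funext x
    ring
  rw [show ((fun x => JKL S h lam0 δ κ τ ϑ₀ x - φ x) + φ) = JKL S h lam0 δ κ τ ϑ₀ from hfe] at hJd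
  have hval : g2 lam0 A - c₂ = A * L - S := by
    rw [hc2def, g2_eq hlam0 hA, g2_eq (by linarith : (0:ℝ) < S + lam0) hA]
    have hLe : L = Real.log (S + lam0) - Real.log lam0 := by
      rw [hLdef, show (1 + S / lam0) = (S + lam0) / lam0 by rw [add_div, div_self hlam0.ne']; ring,
        Real.log_div (by linarith) hlam0.ne']
    rw [hLe]
    ring
  constructor
  · rw [← hval]
    simpa using hJd
  · exact hm
end
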